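/- arXiv:0807.1904 — 2 statements merged into one kernel-verified Lean document; each statement's English description precedes it below -/
import Mathlib

section
/- For every real two-form F and every vector t on 4-dimensional Minkowski space, writing t_a = η_{ab} t^b, the following identity holds for all indices m, n: (*F)_{mx} t^x (*F)_{ny} t^y = (1/2) F_{ab} F^{ab} (t_m t_n - (t_x t^x) η_{mn}) + η_{mn} (F_{xa} t^x)(F^{ya} t_y) - (F_{nx} t^x)(F_{my} t^y) + (F^{bx} t_x) t_m F_{nb} + (F^{bx} t_x) t_n F_{mb} + (t_x t^x) F_{ma} F_n{}^a. -/
noncomputable section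

/-- Minkowski metric `η = diag(-1,1,1,1)`. -/
def mk (a b : Fin 4) : ℝ := if a = b then (if a = 0 then -1 else 1) else 0

/-- Levi-Civita symbol, totally antisymmetric with `ε₀₁₂₃ = 1`
(Vandermonde product of the index values, normalized). -/
def lc (a b c d : Fin 4) : ℝ :=
  ((((b : ℕ) : ℝ) - ((a : ℕ) : ℝ)) * (((c : ℕ) : ℝ) - ((a : ℕ) : ℝ)) *
      (((d : ℕ) : ℝ) - ((a : ℕ) : ℝ)) * (((c : ℕ) : ℝ) - ((b : ℕ) : ℝ)) *
      (((d : ℕ) : ℝ) - ((b : ℕ) : ℝ)) * (((d : ℕ) : ℝ) - ((c : ℕ) : ℝ))) / 12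

/-- Complexified Minkowski metric. -/
def mkC (a b : Fin 4) : ℂ := (mk a b : ℝ)

/-- Complexified Levi-Civita symbol. -/
def lcC (a b c d : Fin 4) : ℂ := (lc a b c d : ℝ)

/-- Hodge dual of a real two-form: `(*X)_{ab} = (1/2) ε_{abcd} X^{cd}`. -/
def dualR (X : Fin 4 → Fin 4 → ℝ) (a b : Fin 4) : ℝ :=
  (1/2) * ∑ c, ∑ d, ∑ e, ∑ f, lc a b c d * mk c e * mk d f * X e f

/-- Hodge dual of a complex two-form. -/
def dualC (X : Fin 4 → Fin 4 → ℂ) (a b : Fin 4) : ℂ :=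
  (1/2) * ∑ c, ∑ d, ∑ e, ∑ f, lcC a b c d * mkC c e * mkC d f * X e f

/-- Anti-self-dual part `𝒳_{ab} = (1/2)(X_{ab} + i (*X)_{ab})` of a real two-form. -/
def asd (X : Fin 4 → Fin 4 → ℝ) (a b : Fin 4) : ℂ :=
  (1/2) * ((X a b : ℂ) + Complex.I * (dualR X a b : ℂ))

/-- Lowering an index with the Minkowski metric: `t_a = η_{ab} t^b`. -/
def lo (t : Fin 4 → ℝ) (a : Fin 4) : ℝ := ∑ b, mk a b * t b

lemma fv0 : ((0:Fin 4):ℕ) = 0 := rfl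
lemma fv1 : ((1:Fin 4):ℕ) = 1 := rfl
lemma fv2 : ((2:Fin 4):ℕ) = 2 := rfl
lemma fv3 : ((3:Fin 4):ℕ) = 3 := rfl
lemma mk00 : mk 0 0 = -1 := by norm_num [mk, Fin.ext_iff, fv0, fv1, fv2, fv3]
lemma mk01 : mk 0 1 = 0 := by norm_num [mk, Fin.ext_iff, fv0, fv1, fv2, fv3]
lemma mk02 : mk 0 2 = 0 := by norm_num [mk, Fin.ext_iff, fv0, fv1, fv2, fv3]
lemma mk03 : mk 0 3 = 0 := by norm_num [mk, Fin.ext_iff, fv0, fv1, fv2, fv3]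
lemma mk10 : mk 1 0 = 0 := by norm_num [mk, Fin.ext_iff, fv0, fv1, fv2, fv3]
lemma mk11 : mk 1 1 = 1 := by norm_num [mk, Fin.ext_iff, fv0, fv1, fv2, fv3]
lemma mk12 : mk 1 2 = 0 := by norm_num [mk, Fin.ext_iff, fv0, fv1, fv2, fv3]
lemma mk13 : mk 1 3 = 0 := by norm_num [mk, Fin.ext_iff, fv0, fv1, fv2, fv3]
lemma mk20 : mk 2 0 = 0 := by norm_num [mk, Fin.ext_iff, fv0, fv1, fv2, fv3]
lemma mk21 : mk 2 1 = 0 := by norm_num [mk, Fin.ext_iff, fv0, fv1, fv2, fv3]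
lemma mk22 : mk 2 2 = 1 := by norm_num [mk, Fin.ext_iff, fv0, fv1, fv2, fv3]
lemma mk23 : mk 2 3 = 0 := by norm_num [mk, Fin.ext_iff, fv0, fv1, fv2, fv3]
lemma mk30 : mk 3 0 = 0 := by norm_num [mk, Fin.ext_iff, fv0, fv1, fv2, fv3]
lemma mk31 : mk 3 1 = 0 := by norm_num [mk, Fin.ext_iff, fv0, fv1, fv2, fv3]
lemma mk32 : mk 3 2 = 0 := by norm_num [mk, Fin.ext_iff, fv0, fv1, fv2, fv3]
lemma mk33 : mk 3 3 = 1 := by norm_num [mk, Fin.ext_iff, fv0, fv1, fv2, fv3]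
lemma sFF (F : Fin 4 → Fin 4 → ℝ) : (∑ a, ∑ b, ∑ c, ∑ d, F a b * mk a c * mk b d * F c d) = F 0 0 * F 0 0 + (-1) * F 0 1 * F 0 1 + (-1) * F 0 2 * F 0 2 + (-1) * F 0 3 * F 0 3 + (-1) * F 1 0 * F 1 0 + F 1 1 * F 1 1 + F 1 2 * F 1 2 + F 1 3 * F 1 3 + (-1) * F 2 0 * F 2 0 + F 2 1 * F 2 1 + F 2 2 * F 2 2 + F 2 3 * F 2 3 + (-1) * F 3 0 * F 3 0 + F 3 1 * F 3 1 + F 3 2 * F 3 2 + F 3 3 * F 3 3 := by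
  simp only [lo, Fin.sum_univ_four, mk00, mk01, mk02, mk03, mk10, mk11, mk12, mk13, mk20, mk21, mk22, mk23, mk30, mk31, mk32, mk33]
  try ring

lemma sTT (t : Fin 4 → ℝ) : (∑ x, lo t x * t x) = (-1) * t 0 * t 0 + t 1 * t 1 + t 2 * t 2 + t 3 * t 3 := by
  simp only [lo, Fin.sum_univ_four, mk00, mk01, mk02, mk03, mk10, mk11, mk12, mk13, mk20, mk21, mk22, mk23, mk30, mk31, mk32, mk33]
  try ring

lemma sMID (F : Fin 4 → Fin 4 → ℝ) (t : Fin 4 → ℝ) : (∑ a, (∑ x, F x a * t x) * (∑ c, ∑ d, mk a d * F c d * t c)) = (-1) * F 0 0 * F 0 0 * t 0 * t 0 + (-2) * F 0 0 * F 1 0 * t 0 * t 1 + (-2) * F 0 0 * F 2 0 * t 0 * t 2 + (-2) * F 0 0 * F 3 0 * t 0 * t 3 + F 0 1 * F 0 1 * t 0 * t 0 + 2 * F 0 1 * F 1 1 * t 0 * t 1 + 2 * F 0 1 * F 2 1 * t 0 * t 2 + 2 * F 0 1 * F 3 1 * t 0 * t 3 + F 0 2 * F 0 2 * t 0 * t 0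 + 2 * F 0 2 * F 1 2 * t 0 * t 1 + 2 * F 0 2 * F 2 2 * t 0 * t 2 + 2 * F 0 2 * F 3 2 * t 0 * t 3 + F 0 3 * F 0 3 * t 0 * t 0 + 2 * F 0 3 * F 1 3 * t 0 * t 1 + 2 * F 0 3 * F 2 3 * t 0 * t 2 + 2 * F 0 3 * F 3 3 * t 0 * t 3 + (-1) * F 1 0 * F 1 0 * t 1 * t 1 + (-2) * F 1 0 * F 2 0 * t 1 * t 2 + (-2) * F 1 0 * F 3 0 * t 1 * t 3 + F 1 1 * F 1 1 * t 1 * t 1 + 2 * F 1 1 * F 2 1 * t 1 * t 2 + 2 * F 1 1 * F 3 1 * t 1 * t 3 + F 1 2 * F 1 2 * t 1 * t 1 + 2 * F 1 2 * F 2 2 * t 1 * t 2 + 2 * F 1 2 * F 3 2 * t 1 * t 3 + F 1 3 * F 1 3 * t 1 * t 1 + 2 * F 1 3 * F 2 3 * t 1 * t 2 + 2 * F 1 3 * F 3 3 * t 1 * t 3 + (-1) * F 2 0 * F 2 0 * t 2 * t 2 + (-2) * F 2 0 * F 3 0 * t 2 * t 3 + F 2 1 * F 2 1 * t 2 * t 2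 + 2 * F 2 1 * F 3 1 * t 2 * t 3 + F 2 2 * F 2 2 * t 2 * t 2 + 2 * F 2 2 * F 3 2 * t 2 * t 3 + F 2 3 * F 2 3 * t 2 * t 2 + 2 * F 2 3 * F 3 3 * t 2 * t 3 + (-1) * F 3 0 * F 3 0 * t 3 * t 3 + F 3 1 * F 3 1 * t 3 * t 3 + F 3 2 * F 3 2 * t 3 * t 3 + F 3 3 * F 3 3 * t 3 * t 3 := by
  simp only [lo, Fin.sum_univ_four, mk00, mk01, mk02, mk03, mk10, mk11, mk12, mk13, mk20, mk21, mk22, mk23, mk30, mk31, mk32, mk33]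
  try ring

lemma loE0 (t : Fin 4 → ℝ) : lo t 0 = (-1) * t 0 := by
  simp only [lo, Fin.sum_univ_four, mk00, mk01, mk02, mk03, mk10, mk11, mk12, mk13, mk20, mk21, mk22, mk23, mk30, mk31, mk32, mk33]
  try ring

lemma loE1 (t : Fin 4 → ℝ) : lo t 1 = t 1 := by
  simp only [lo, Fin.sum_univ_four, mk00, mk01, mk02, mk03, mk10, mk11, mk12, mk13, mk20, mk21, mk22, mk23, mk30, mk31, mk32, mk33]
  try ring

lemma loE2 (t : Fin 4 → ℝ) : lo t 2 = t 2 := by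
  simp only [lo, Fin.sum_univ_four, mk00, mk01, mk02, mk03, mk10, mk11, mk12, mk13, mk20, mk21, mk22, mk23, mk30, mk31, mk32, mk33]
  try ring

lemma loE3 (t : Fin 4 → ℝ) : lo t 3 = t 3 := by
  simp only [lo, Fin.sum_univ_four, mk00, mk01, mk02, mk03, mk10, mk11, mk12, mk13, mk20, mk21, mk22, mk23, mk30, mk31, mk32, mk33]
  try ring

lemma fc0 (F : Fin 4 → Fin 4 → ℝ) (t : Fin 4 → ℝ) : (∑ x, F 0 x * t x) = F 0 0 * t 0 + F 0 1 * t 1 + F 0 2 * t 2 + F 0 3 * t 3 := by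
  simp only [lo, Fin.sum_univ_four, mk00, mk01, mk02, mk03, mk10, mk11, mk12, mk13, mk20, mk21, mk22, mk23, mk30, mk31, mk32, mk33]
  try ring

lemma fc1 (F : Fin 4 → Fin 4 → ℝ) (t : Fin 4 → ℝ) : (∑ x, F 1 x * t x) = F 1 0 * t 0 + F 1 1 * t 1 + F 1 2 * t 2 + F 1 3 * t 3 := by
  simp only [lo, Fin.sum_univ_four, mk00, mk01, mk02, mk03, mk10, mk11, mk12, mk13, mk20, mk21, mk22, mk23, mk30, mk31, mk32, mk33]
  try ring

lemma fc2 (F : Fin 4 → Fin 4 → ℝ) (t : Fin 4 → ℝ) : (∑ x, F 2 x * t x) = F 2 0 * t 0 + F 2 1 * t 1 + F 2 2 * t 2 + F 2 3 * t 3 := by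
  simp only [lo, Fin.sum_univ_four, mk00, mk01, mk02, mk03, mk10, mk11, mk12, mk13, mk20, mk21, mk22, mk23, mk30, mk31, mk32, mk33]
  try ring

lemma fc3 (F : Fin 4 → Fin 4 → ℝ) (t : Fin 4 → ℝ) : (∑ x, F 3 x * t x) = F 3 0 * t 0 + F 3 1 * t 1 + F 3 2 * t 2 + F 3 3 * t 3 := by
  simp only [lo, Fin.sum_univ_four, mk00, mk01, mk02, mk03, mk10, mk11, mk12, mk13, mk20, mk21, mk22, mk23, mk30, mk31, mk32, mk33]
  try ring

lemma bc0 (F : Fin 4 → Fin 4 → ℝ) (t : Fin 4 → ℝ) : (∑ b, (∑ c, ∑ d, mk b c * F c d * t d) * F 0 b) = (-1) * F 0 0 * F 0 0 * t 0 + (-1) * F 0 0 * F 0 1 * t 1 + (-1) * F 0 0 * F 0 2 * t 2 + (-1) * F 0 0 * F 0 3 * t 3 + F 0 1 * F 1 0 * t 0 + F 0 1 * F 1 1 * t 1 + F 0 1 * F 1 2 * t 2 + F 0 1 * F 1 3 * t 3 + F 0 2 * F 2 0 * t 0 + F 0 2 * F 2 1 * t 1 + F 0 2 * F 2 2 * t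 2 + F 0 2 * F 2 3 * t 3 + F 0 3 * F 3 0 * t 0 + F 0 3 * F 3 1 * t 1 + F 0 3 * F 3 2 * t 2 + F 0 3 * F 3 3 * t 3 := by
  simp only [lo, Fin.sum_univ_four, mk00, mk01, mk02, mk03, mk10, mk11, mk12, mk13, mk20, mk21, mk22, mk23, mk30, mk31, mk32, mk33]
  try ring

lemma bc1 (F : Fin 4 → Fin 4 → ℝ) (t : Fin 4 → ℝ) : (∑ b, (∑ c, ∑ d, mk b c * F c d * t d) * F 1 b) = (-1) * F 0 0 * F 1 0 * t 0 + (-1) * F 0 1 * F 1 0 * t 1 + (-1) * F 0 2 * F 1 0 * t 2 + (-1) * F 0 3 * F 1 0 * t 3 + F 1 0 * F 1 1 * t 0 + F 1 1 * F 1 1 * t 1 + F 1 1 * F 1 2 * t 2 + F 1 1 * F 1 3 * t 3 + F 1 2 * F 2 0 * t 0 + F 1 2 * F 2 1 * t 1 + F 1 2 * F 2 2 * t 2 + F 1 2 * F 2 3 * t 3 + F 1 3 * F 3 0 * t 0 + F 1 3 * F 3 1 * t 1 + F 1 3 * F 3 2 * t 2 + F 1 3 * F 3 3 * t 3 := by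
  simp only [lo, Fin.sum_univ_four, mk00, mk01, mk02, mk03, mk10, mk11, mk12, mk13, mk20, mk21, mk22, mk23, mk30, mk31, mk32, mk33]
  try ring

lemma bc2 (F : Fin 4 → Fin 4 → ℝ) (t : Fin 4 → ℝ) : (∑ b, (∑ c, ∑ d, mk b c * F c d * t d) * F 2 b) = (-1) * F 0 0 * F 2 0 * t 0 + (-1) * F 0 1 * F 2 0 * t 1 + (-1) * F 0 2 * F 2 0 * t 2 + (-1) * F 0 3 * F 2 0 * t 3 + F 1 0 * F 2 1 * t 0 + F 1 1 * F 2 1 * t 1 + F 1 2 * F 2 1 * t 2 + F 1 3 * F 2 1 * t 3 + F 2 0 * F 2 2 * t 0 + F 2 1 * F 2 2 * t 1 + F 2 2 * F 2 2 * t 2 + F 2 2 * F 2 3 * t 3 + F 2 3 * F 3 0 * t 0 + F 2 3 * F 3 1 * t 1 + F 2 3 * F 3 2 * t 2 + F 2 3 * F 3 3 * t 3 := by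
  simp only [lo, Fin.sum_univ_four, mk00, mk01, mk02, mk03, mk10, mk11, mk12, mk13, mk20, mk21, mk22, mk23, mk30, mk31, mk32, mk33]
  try ring

lemma bc3 (F : Fin 4 → Fin 4 → ℝ) (t : Fin 4 → ℝ) : (∑ b, (∑ c, ∑ d, mk b c * F c d * t d) * F 3 b) = (-1) * F 0 0 * F 3 0 * t 0 + (-1) * F 0 1 * F 3 0 * t 1 + (-1) * F 0 2 * F 3 0 * t 2 + (-1) * F 0 3 * F 3 0 * t 3 + F 1 0 * F 3 1 * t 0 + F 1 1 * F 3 1 * t 1 + F 1 2 * F 3 1 * t 2 + F 1 3 * F 3 1 * t 3 + F 2 0 * F 3 2 * t 0 + F 2 1 * F 3 2 * t 1 + F 2 2 * F 3 2 * t 2 + F 2 3 * F 3 2 * t 3 + F 3 0 * F 3 3 * t 0 + F 3 1 * F 3 3 * t 1 + F 3 2 * F 3 3 * t 2 + F 3 3 * F 3 3 * t 3 := by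
  simp only [lo, Fin.sum_univ_four, mk00, mk01, mk02, mk03, mk10, mk11, mk12, mk13, mk20, mk21, mk22, mk23, mk30, mk31, mk32, mk33]
  try ring

lemma ffE00 (F : Fin 4 → Fin 4 → ℝ) : (∑ a, ∑ c, F 0 a * mk a c * F 0 c) = (-1) * F 0 0 * F 0 0 + F 0 1 * F 0 1 + F 0 2 * F 0 2 + F 0 3 * F 0 3 := by
  simp only [lo, Fin.sum_univ_four, mk00, mk01, mk02, mk03, mk10, mk11, mk12, mk13, mk20, mk21, mk22, mk23, mk30, mk31, mk32, mk33]
  try ring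

lemma ffE01 (F : Fin 4 → Fin 4 → ℝ) : (∑ a, ∑ c, F 0 a * mk a c * F 1 c) = (-1) * F 0 0 * F 1 0 + F 0 1 * F 1 1 + F 0 2 * F 1 2 + F 0 3 * F 1 3 := by
  simp only [lo, Fin.sum_univ_four, mk00, mk01, mk02, mk03, mk10, mk11, mk12, mk13, mk20, mk21, mk22, mk23, mk30, mk31, mk32, mk33]
  try ring

lemma ffE02 (F : Fin 4 → Fin 4 → ℝ) : (∑ a, ∑ c, F 0 a * mk a c * F 2 c) = (-1) * F 0 0 * F 2 0 + F 0 1 * F 2 1 + F 0 2 * F 2 2 + F 0 3 * F 2 3 := by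
  simp only [lo, Fin.sum_univ_four, mk00, mk01, mk02, mk03, mk10, mk11, mk12, mk13, mk20, mk21, mk22, mk23, mk30, mk31, mk32, mk33]
  try ring

lemma ffE03 (F : Fin 4 → Fin 4 → ℝ) : (∑ a, ∑ c, F 0 a * mk a c * F 3 c) = (-1) * F 0 0 * F 3 0 + F 0 1 * F 3 1 + F 0 2 * F 3 2 + F 0 3 * F 3 3 := by
  simp only [lo, Fin.sum_univ_four, mk00, mk01, mk02, mk03, mk10, mk11, mk12, mk13, mk20, mk21, mk22, mk23, mk30, mk31, mk32, mk33]
  try ring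

lemma ffE10 (F : Fin 4 → Fin 4 → ℝ) : (∑ a, ∑ c, F 1 a * mk a c * F 0 c) = (-1) * F 0 0 * F 1 0 + F 0 1 * F 1 1 + F 0 2 * F 1 2 + F 0 3 * F 1 3 := by
  simp only [lo, Fin.sum_univ_four, mk00, mk01, mk02, mk03, mk10, mk11, mk12, mk13, mk20, mk21, mk22, mk23, mk30, mk31, mk32, mk33]
  try ring

lemma ffE11 (F : Fin 4 → Fin 4 → ℝ) : (∑ a, ∑ c, F 1 a * mk a c * F 1 c) = (-1) * F 1 0 * F 1 0 + F 1 1 * F 1 1 + F 1 2 * F 1 2 + F 1 3 * F 1 3 := by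
  simp only [lo, Fin.sum_univ_four, mk00, mk01, mk02, mk03, mk10, mk11, mk12, mk13, mk20, mk21, mk22, mk23, mk30, mk31, mk32, mk33]
  try ring

lemma ffE12 (F : Fin 4 → Fin 4 → ℝ) : (∑ a, ∑ c, F 1 a * mk a c * F 2 c) = (-1) * F 1 0 * F 2 0 + F 1 1 * F 2 1 + F 1 2 * F 2 2 + F 1 3 * F 2 3 := by
  simp only [lo, Fin.sum_univ_four, mk00, mk01, mk02, mk03, mk10, mk11, mk12, mk13, mk20, mk21, mk22, mk23, mk30, mk31, mk32, mk33]
  try ring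

lemma ffE13 (F : Fin 4 → Fin 4 → ℝ) : (∑ a, ∑ c, F 1 a * mk a c * F 3 c) = (-1) * F 1 0 * F 3 0 + F 1 1 * F 3 1 + F 1 2 * F 3 2 + F 1 3 * F 3 3 := by
  simp only [lo, Fin.sum_univ_four, mk00, mk01, mk02, mk03, mk10, mk11, mk12, mk13, mk20, mk21, mk22, mk23, mk30, mk31, mk32, mk33]
  try ring

lemma ffE20 (F : Fin 4 → Fin 4 → ℝ) : (∑ a, ∑ c, F 2 a * mk a c * F 0 c) = (-1) * F 0 0 * F 2 0 + F 0 1 * F 2 1 + F 0 2 * F 2 2 + F 0 3 * F 2 3 := by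
  simp only [lo, Fin.sum_univ_four, mk00, mk01, mk02, mk03, mk10, mk11, mk12, mk13, mk20, mk21, mk22, mk23, mk30, mk31, mk32, mk33]
  try ring

lemma ffE21 (F : Fin 4 → Fin 4 → ℝ) : (∑ a, ∑ c, F 2 a * mk a c * F 1 c) = (-1) * F 1 0 * F 2 0 + F 1 1 * F 2 1 + F 1 2 * F 2 2 + F 1 3 * F 2 3 := by
  simp only [lo, Fin.sum_univ_four, mk00, mk01, mk02, mk03, mk10, mk11, mk12, mk13, mk20, mk21, mk22, mk23, mk30, mk31, mk32, mk33]
  try ring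

lemma ffE22 (F : Fin 4 → Fin 4 → ℝ) : (∑ a, ∑ c, F 2 a * mk a c * F 2 c) = (-1) * F 2 0 * F 2 0 + F 2 1 * F 2 1 + F 2 2 * F 2 2 + F 2 3 * F 2 3 := by
  simp only [lo, Fin.sum_univ_four, mk00, mk01, mk02, mk03, mk10, mk11, mk12, mk13, mk20, mk21, mk22, mk23, mk30, mk31, mk32, mk33]
  try ring

lemma ffE23 (F : Fin 4 → Fin 4 → ℝ) : (∑ a, ∑ c, F 2 a * mk a c * F 3 c) = (-1) * F 2 0 * F 3 0 + F 2 1 * F 3 1 + F 2 2 * F 3 2 + F 2 3 * F 3 3 := by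
  simp only [lo, Fin.sum_univ_four, mk00, mk01, mk02, mk03, mk10, mk11, mk12, mk13, mk20, mk21, mk22, mk23, mk30, mk31, mk32, mk33]
  try ring

lemma ffE30 (F : Fin 4 → Fin 4 → ℝ) : (∑ a, ∑ c, F 3 a * mk a c * F 0 c) = (-1) * F 0 0 * F 3 0 + F 0 1 * F 3 1 + F 0 2 * F 3 2 + F 0 3 * F 3 3 := by
  simp only [lo, Fin.sum_univ_four, mk00, mk01, mk02, mk03, mk10, mk11, mk12, mk13, mk20, mk21, mk22, mk23, mk30, mk31, mk32, mk33]
  try ring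

lemma ffE31 (F : Fin 4 → Fin 4 → ℝ) : (∑ a, ∑ c, F 3 a * mk a c * F 1 c) = (-1) * F 1 0 * F 3 0 + F 1 1 * F 3 1 + F 1 2 * F 3 2 + F 1 3 * F 3 3 := by
  simp only [lo, Fin.sum_univ_four, mk00, mk01, mk02, mk03, mk10, mk11, mk12, mk13, mk20, mk21, mk22, mk23, mk30, mk31, mk32, mk33]
  try ring

lemma ffE32 (F : Fin 4 → Fin 4 → ℝ) : (∑ a, ∑ c, F 3 a * mk a c * F 2 c) = (-1) * F 2 0 * F 3 0 + F 2 1 * F 3 1 + F 2 2 * F 3 2 + F 2 3 * F 3 3 := by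
  simp only [lo, Fin.sum_univ_four, mk00, mk01, mk02, mk03, mk10, mk11, mk12, mk13, mk20, mk21, mk22, mk23, mk30, mk31, mk32, mk33]
  try ring

lemma ffE33 (F : Fin 4 → Fin 4 → ℝ) : (∑ a, ∑ c, F 3 a * mk a c * F 3 c) = (-1) * F 3 0 * F 3 0 + F 3 1 * F 3 1 + F 3 2 * F 3 2 + F 3 3 * F 3 3 := by
  simp only [lo, Fin.sum_univ_four, mk00, mk01, mk02, mk03, mk10, mk11, mk12, mk13, mk20, mk21, mk22, mk23, mk30, mk31, mk32, mk33]
  try ring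

lemma dv00 (F : Fin 4 → Fin 4 → ℝ) : dualR F 0 0 = 0 := by
  norm_num [dualR, lc, Fin.sum_univ_four, fv0, fv1, fv2, fv3, mk00, mk01, mk02, mk03, mk10, mk11, mk12, mk13, mk20, mk21, mk22, mk23, mk30, mk31, mk32, mk33] <;> ring

lemma dv01 (F : Fin 4 → Fin 4 → ℝ) : dualR F 0 1 = (1/2) * F 2 3 + (-1/2) * F 3 2 := by
  norm_num [dualR, lc, Fin.sum_univ_four, fv0, fv1, fv2, fv3, mk00, mk01, mk02, mk03, mk10, mk11, mk12, mk13, mk20, mk21, mk22, mk23, mk30, mk31, mk32, mk33] <;> ring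

lemma dv02 (F : Fin 4 → Fin 4 → ℝ) : dualR F 0 2 = (-1/2) * F 1 3 + (1/2) * F 3 1 := by
  norm_num [dualR, lc, Fin.sum_univ_four, fv0, fv1, fv2, fv3, mk00, mk01, mk02, mk03, mk10, mk11, mk12, mk13, mk20, mk21, mk22, mk23, mk30, mk31, mk32, mk33] <;> ring

lemma dv03 (F : Fin 4 → Fin 4 → ℝ) : dualR F 0 3 = (1/2) * F 1 2 + (-1/2) * F 2 1 := by
  norm_num [dualR, lc, Fin.sum_univ_four, fv0, fv1, fv2, fv3, mk00, mk01, mk02, mk03, mk10, mk11, mk12, mk13, mk20, mk21, mk22, mk23, mk30, mk31, mk32, mk33] <;> ring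

lemma dv10 (F : Fin 4 → Fin 4 → ℝ) : dualR F 1 0 = (-1/2) * F 2 3 + (1/2) * F 3 2 := by
  norm_num [dualR, lc, Fin.sum_univ_four, fv0, fv1, fv2, fv3, mk00, mk01, mk02, mk03, mk10, mk11, mk12, mk13, mk20, mk21, mk22, mk23, mk30, mk31, mk32, mk33] <;> ring

lemma dv11 (F : Fin 4 → Fin 4 → ℝ) : dualR F 1 1 = 0 := by
  norm_num [dualR, lc, Fin.sum_univ_four, fv0, fv1, fv2, fv3, mk00, mk01, mk02, mk03, mk10, mk11, mk12, mk13, mk20, mk21, mk22, mk23, mk30, mk31, mk32, mk33] <;> ring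

lemma dv12 (F : Fin 4 → Fin 4 → ℝ) : dualR F 1 2 = (-1/2) * F 0 3 + (1/2) * F 3 0 := by
  norm_num [dualR, lc, Fin.sum_univ_four, fv0, fv1, fv2, fv3, mk00, mk01, mk02, mk03, mk10, mk11, mk12, mk13, mk20, mk21, mk22, mk23, mk30, mk31, mk32, mk33] <;> ring

lemma dv13 (F : Fin 4 → Fin 4 → ℝ) : dualR F 1 3 = (1/2) * F 0 2 + (-1/2) * F 2 0 := by
  norm_num [dualR, lc, Fin.sum_univ_four, fv0, fv1, fv2, fv3, mk00, mk01, mk02, mk03, mk10, mk11, mk12, mk13, mk20, mk21, mk22, mk23, mk30, mk31, mk32, mk33] <;> ring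

lemma dv20 (F : Fin 4 → Fin 4 → ℝ) : dualR F 2 0 = (1/2) * F 1 3 + (-1/2) * F 3 1 := by
  norm_num [dualR, lc, Fin.sum_univ_four, fv0, fv1, fv2, fv3, mk00, mk01, mk02, mk03, mk10, mk11, mk12, mk13, mk20, mk21, mk22, mk23, mk30, mk31, mk32, mk33] <;> ring

lemma dv21 (F : Fin 4 → Fin 4 → ℝ) : dualR F 2 1 = (1/2) * F 0 3 + (-1/2) * F 3 0 := by
  norm_num [dualR, lc, Fin.sum_univ_four, fv0, fv1, fv2, fv3, mk00, mk01, mk02, mk03, mk10, mk11, mk12, mk13, mk20, mk21, mk22, mk23, mk30, mk31, mk32, mk33] <;> ring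

lemma dv22 (F : Fin 4 → Fin 4 → ℝ) : dualR F 2 2 = 0 := by
  norm_num [dualR, lc, Fin.sum_univ_four, fv0, fv1, fv2, fv3, mk00, mk01, mk02, mk03, mk10, mk11, mk12, mk13, mk20, mk21, mk22, mk23, mk30, mk31, mk32, mk33] <;> ring

lemma dv23 (F : Fin 4 → Fin 4 → ℝ) : dualR F 2 3 = (-1/2) * F 0 1 + (1/2) * F 1 0 := by
  norm_num [dualR, lc, Fin.sum_univ_four, fv0, fv1, fv2, fv3, mk00, mk01, mk02, mk03, mk10, mk11, mk12, mk13, mk20, mk21, mk22, mk23, mk30, mk31, mk32, mk33] <;> ring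

lemma dv30 (F : Fin 4 → Fin 4 → ℝ) : dualR F 3 0 = (-1/2) * F 1 2 + (1/2) * F 2 1 := by
  norm_num [dualR, lc, Fin.sum_univ_four, fv0, fv1, fv2, fv3, mk00, mk01, mk02, mk03, mk10, mk11, mk12, mk13, mk20, mk21, mk22, mk23, mk30, mk31, mk32, mk33] <;> ring

lemma dv31 (F : Fin 4 → Fin 4 → ℝ) : dualR F 3 1 = (-1/2) * F 0 2 + (1/2) * F 2 0 := by
  norm_num [dualR, lc, Fin.sum_univ_four, fv0, fv1, fv2, fv3, mk00, mk01, mk02, mk03, mk10, mk11, mk12, mk13, mk20, mk21, mk22, mk23, mk30, mk31, mk32, mk33] <;> ring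

lemma dv32 (F : Fin 4 → Fin 4 → ℝ) : dualR F 3 2 = (1/2) * F 0 1 + (-1/2) * F 1 0 := by
  norm_num [dualR, lc, Fin.sum_univ_four, fv0, fv1, fv2, fv3, mk00, mk01, mk02, mk03, mk10, mk11, mk12, mk13, mk20, mk21, mk22, mk23, mk30, mk31, mk32, mk33] <;> ring

lemma dv33 (F : Fin 4 → Fin 4 → ℝ) : dualR F 3 3 = 0 := by
  norm_num [dualR, lc, Fin.sum_univ_four, fv0, fv1, fv2, fv3, mk00, mk01, mk02, mk03, mk10, mk11, mk12, mk13, mk20, mk21, mk22, mk23, mk30, mk31, mk32, mk33] <;> ring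

set_option maxHeartbeats 3000000

/-- the identity (13) of Mars for `(*F)_{mx} t^x (*F)_{ny} t^y`. -/
theorem dual_squared_contraction_identity (F : Fin 4 → Fin 4 → ℝ)
    (hF : ∀ a b, F a b = - F b a) (t : Fin 4 → ℝ) :
    ∀ m n,
      (∑ x, dualR F m x * t x) * (∑ y, dualR F n y * t y)
        = (1/2) * (∑ a, ∑ b, ∑ c, ∑ d, F a b * mk a c * mk b d * F c d) *
            (lo t m * lo t n - (∑ x, lo t x * t x) * mk m n)
          + mk m n * (∑ a, (∑ x, F x a * t x) * (∑ c, ∑ d, mk a d * F c d * t c))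
          - (∑ x, F n x * t x) * (∑ y, F m y * t y)
          + (∑ b, (∑ c, ∑ d, mk b c * F c d * t d) * F n b) * lo t m
          + (∑ b, (∑ c, ∑ d, mk b c * F c d * t d) * F m b) * lo t n
          + (∑ x, lo t x * t x) * (∑ a, ∑ c, F m a * mk a c * F n c) := by
  have h00 : F 0 0 = 0 := by have := hF 0 0; linarith
  have h11 : F 1 1 = 0 := by have := hF 1 1; linarith
  have h22 : F 2 2 = 0 := by have := hF 2 2; linarith
  have h33 : F 3 3 = 0 := by have := hF 3 3; linarith
  have h10 := hF 1 0
  have h20 := hF 2 0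
  have h30 := hF 3 0
  have h21 := hF 2 1
  have h31 := hF 3 1
  have h32 := hF 3 2
  intro m n
  have hm : m = 0 ∨ m = 1 ∨ m = 2 ∨ m = 3 := by omega
  have hn : n = 0 ∨ n = 1 ∨ n = 2 ∨ n = 3 := by omega
  rcases hm with rfl|rfl|rfl|rfl <;> rcases hn with rfl|rfl|rfl|rfl <;>
    simp only [sFF, sTT, sMID, loE0, loE1, loE2, loE3, fc0, fc1, fc2, fc3, bc0, bc1, bc2, bc3, ffE00, ffE01, ffE02, ffE03, ffE10, ffE11, ffE12, ffE13, ffE20, ffE21, ffE22, ffE23, ffE30, ffE31, ffE32, ffE33, dv00, dv01, dv02, dv03, dv10, dv11, dv12, dv13, dv20, dv21, dv22, dv23, dv30, dv31, dv32, dv33, mk00, mk01, mk02, mk03, mk10, mk11, mk12, mk13, mk20, mk21,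
      mk22, mk23, mk30, mk31, mk32, mk33, h00, h11, h22, h33, h10, h20, h30, h21, h31, h32] <;>
    ring
end
end

section
/- Let T be a symmetric trace-free real two-index tensor on 4-dimensional Minkowski space (T_{ab} = T_{ba}, η^{ab} T_{ab} = 0) and set E_{abcd} = (1/2)(T_{ac} η_{bd} + T_{bd} η_{ac} - T_{ad} η_{bc} - T_{bc} η_{ad}). Then E intertwines the two duality eigenspaces: for every anti-self-dual complex two-form 𝒳, the complex two-form (a,b) ↦ E_{abcd} 𝒳^{cd} is self-dual, and for every self-dual complex two-form 𝒵, the complex two-form (a,b) ↦ E_{abcd} 𝒵^{cd} is anti-self-dual. -/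
noncomputable section

/-- The Kulkarni–Nomizu-type tensor
`E_{abcd} = (1/2)(T_{ac}η_{bd} + T_{bd}η_{ac} - T_{ad}η_{bc} - T_{bc}η_{ad})`. -/
def knE (T : Fin 4 → Fin 4 → ℝ) (a b c d : Fin 4) : ℝ :=
  (1/2) * (T a c * mk b d + T b d * mk a c - T a d * mk b c - T b c * mk a d)

lemma contract (A : Fin 4 → Fin 4 → ℂ) (X : Fin 4 → Fin 4 → ℂ) :
    (∑ c, ∑ d, ∑ e, ∑ f, A c d * mkC c e * mkC d f * X e f)
      = ∑ c, ∑ d, A c d * mkC c c * mkC d d * X c d := by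
  simp [Fin.sum_univ_four, mkC, mk]

lemma dualC_eq (X : Fin 4 → Fin 4 → ℂ) (a b : Fin 4) :
    dualC X a b = (1/2) * ∑ c, ∑ d, lcC a b c d * mkC c c * mkC d d * X c d := by
  rw [dualC, contract]
lemma dual00 (X : Fin 4 → Fin 4 → ℂ) : dualC X 0 0 = 0 := by
  simp [dualC_eq, Fin.sum_univ_four, lcC, lc, mkC, mk, show ((0:Fin 4):ℕ)=0 from rfl,
    show ((1:Fin 4):ℕ)=1 from rfl, show ((2:Fin 4):ℕ)=2 from rfl, show ((3:Fin 4):ℕ)=3 from rfl]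

lemma dual01 (X : Fin 4 → Fin 4 → ℂ) : dualC X 0 1 = (1/2) * (X 2 3 - X 3 2) := by
  simp [dualC_eq, Fin.sum_univ_four, lcC, lc, mkC, mk, show ((0:Fin 4):ℕ)=0 from rfl,
    show ((1:Fin 4):ℕ)=1 from rfl, show ((2:Fin 4):ℕ)=2 from rfl, show ((3:Fin 4):ℕ)=3 from rfl]
  norm_num; try ring

lemma dual02 (X : Fin 4 → Fin 4 → ℂ) : dualC X 0 2 = (1/2) * (-X 1 3 + X 3 1) := by
  simp [dualC_eq, Fin.sum_univ_four, lcC, lc, mkC, mk, show ((0:Fin 4):ℕ)=0 from rfl,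
    show ((1:Fin 4):ℕ)=1 from rfl, show ((2:Fin 4):ℕ)=2 from rfl, show ((3:Fin 4):ℕ)=3 from rfl]
  norm_num; try ring

lemma dual03 (X : Fin 4 → Fin 4 → ℂ) : dualC X 0 3 = (1/2) * (X 1 2 - X 2 1) := by
  simp [dualC_eq, Fin.sum_univ_four, lcC, lc, mkC, mk, show ((0:Fin 4):ℕ)=0 from rfl,
    show ((1:Fin 4):ℕ)=1 from rfl, show ((2:Fin 4):ℕ)=2 from rfl, show ((3:Fin 4):ℕ)=3 from rfl]
  norm_num; try ring

lemma dual10 (X : Fin 4 → Fin 4 → ℂ) : dualC X 1 0 = (1/2) * (-X 2 3 + X 3 2) := by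
  simp [dualC_eq, Fin.sum_univ_four, lcC, lc, mkC, mk, show ((0:Fin 4):ℕ)=0 from rfl,
    show ((1:Fin 4):ℕ)=1 from rfl, show ((2:Fin 4):ℕ)=2 from rfl, show ((3:Fin 4):ℕ)=3 from rfl]
  norm_num; try ring

lemma dual11 (X : Fin 4 → Fin 4 → ℂ) : dualC X 1 1 = 0 := by
  simp [dualC_eq, Fin.sum_univ_four, lcC, lc, mkC, mk, show ((0:Fin 4):ℕ)=0 from rfl,
    show ((1:Fin 4):ℕ)=1 from rfl, show ((2:Fin 4):ℕ)=2 from rfl, show ((3:Fin 4):ℕ)=3 from rfl]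

lemma dual12 (X : Fin 4 → Fin 4 → ℂ) : dualC X 1 2 = (1/2) * (-X 0 3 + X 3 0) := by
  simp [dualC_eq, Fin.sum_univ_four, lcC, lc, mkC, mk, show ((0:Fin 4):ℕ)=0 from rfl,
    show ((1:Fin 4):ℕ)=1 from rfl, show ((2:Fin 4):ℕ)=2 from rfl, show ((3:Fin 4):ℕ)=3 from rfl]
  norm_num; try ring

lemma dual13 (X : Fin 4 → Fin 4 → ℂ) : dualC X 1 3 = (1/2) * (X 0 2 - X 2 0) := by
  simp [dualC_eq, Fin.sum_univ_four, lcC, lc, mkC, mk, show ((0:Fin 4):ℕ)=0 from rfl,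
    show ((1:Fin 4):ℕ)=1 from rfl, show ((2:Fin 4):ℕ)=2 from rfl, show ((3:Fin 4):ℕ)=3 from rfl]
  norm_num; try ring

lemma dual20 (X : Fin 4 → Fin 4 → ℂ) : dualC X 2 0 = (1/2) * (X 1 3 - X 3 1) := by
  simp [dualC_eq, Fin.sum_univ_four, lcC, lc, mkC, mk, show ((0:Fin 4):ℕ)=0 from rfl,
    show ((1:Fin 4):ℕ)=1 from rfl, show ((2:Fin 4):ℕ)=2 from rfl, show ((3:Fin 4):ℕ)=3 from rfl]
  norm_num; try ring

lemma dual21 (X : Fin 4 → Fin 4 → ℂ) : dualC X 2 1 = (1/2) * (X 0 3 - X 3 0) := by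
  simp [dualC_eq, Fin.sum_univ_four, lcC, lc, mkC, mk, show ((0:Fin 4):ℕ)=0 from rfl,
    show ((1:Fin 4):ℕ)=1 from rfl, show ((2:Fin 4):ℕ)=2 from rfl, show ((3:Fin 4):ℕ)=3 from rfl]
  norm_num; try ring

lemma dual22 (X : Fin 4 → Fin 4 → ℂ) : dualC X 2 2 = 0 := by
  simp [dualC_eq, Fin.sum_univ_four, lcC, lc, mkC, mk, show ((0:Fin 4):ℕ)=0 from rfl,
    show ((1:Fin 4):ℕ)=1 from rfl, show ((2:Fin 4):ℕ)=2 from rfl, show ((3:Fin 4):ℕ)=3 from rfl]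

lemma dual23 (X : Fin 4 → Fin 4 → ℂ) : dualC X 2 3 = (1/2) * (-X 0 1 + X 1 0) := by
  simp [dualC_eq, Fin.sum_univ_four, lcC, lc, mkC, mk, show ((0:Fin 4):ℕ)=0 from rfl,
    show ((1:Fin 4):ℕ)=1 from rfl, show ((2:Fin 4):ℕ)=2 from rfl, show ((3:Fin 4):ℕ)=3 from rfl]
  norm_num; try ring

lemma dual30 (X : Fin 4 → Fin 4 → ℂ) : dualC X 3 0 = (1/2) * (-X 1 2 + X 2 1) := by
  simp [dualC_eq, Fin.sum_univ_four, lcC, lc, mkC, mk, show ((0:Fin 4):ℕ)=0 from rfl,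
    show ((1:Fin 4):ℕ)=1 from rfl, show ((2:Fin 4):ℕ)=2 from rfl, show ((3:Fin 4):ℕ)=3 from rfl]
  norm_num; try ring

lemma dual31 (X : Fin 4 → Fin 4 → ℂ) : dualC X 3 1 = (1/2) * (-X 0 2 + X 2 0) := by
  simp [dualC_eq, Fin.sum_univ_four, lcC, lc, mkC, mk, show ((0:Fin 4):ℕ)=0 from rfl,
    show ((1:Fin 4):ℕ)=1 from rfl, show ((2:Fin 4):ℕ)=2 from rfl, show ((3:Fin 4):ℕ)=3 from rfl]
  norm_num; try ring

lemma dual32 (X : Fin 4 → Fin 4 → ℂ) : dualC X 3 2 = (1/2) * (X 0 1 - X 1 0) := by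
  simp [dualC_eq, Fin.sum_univ_four, lcC, lc, mkC, mk, show ((0:Fin 4):ℕ)=0 from rfl,
    show ((1:Fin 4):ℕ)=1 from rfl, show ((2:Fin 4):ℕ)=2 from rfl, show ((3:Fin 4):ℕ)=3 from rfl]
  norm_num; try ring

lemma dual33 (X : Fin 4 → Fin 4 → ℂ) : dualC X 3 3 = 0 := by
  simp [dualC_eq, Fin.sum_univ_four, lcC, lc, mkC, mk, show ((0:Fin 4):ℕ)=0 from rfl,
    show ((1:Fin 4):ℕ)=1 from rfl, show ((2:Fin 4):ℕ)=2 from rfl, show ((3:Fin 4):ℕ)=3 from rfl]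


set_option maxHeartbeats 4000000 in
lemma key (T : Fin 4 → Fin 4 → ℝ)
    (hTsymm : ∀ a b, T a b = T b a) (hTtr : (∑ a, ∑ b, mk a b * T a b) = 0)
    (X : Fin 4 → Fin 4 → ℂ) (hX : ∀ a b, X a b = - X b a) (a b : Fin 4) :
    dualC (fun a' b' => ∑ c, ∑ d, ∑ e, ∑ f,
        (knE T a' b' c d : ℂ) * mkC c e * mkC d f * X e f) a b
      = - ∑ c, ∑ d, (knE T a b c d : ℂ) * mkC c c * mkC d d * dualC X c d := by
  have hT00 : T 0 0 = T 1 1 + T 2 2 + T 3 3 := by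
    simp [Fin.sum_univ_four, mk] at hTtr; linarith
  have h10 : T 1 0 = T 0 1 := hTsymm 1 0
  have h20 : T 2 0 = T 0 2 := hTsymm 2 0
  have h30 : T 3 0 = T 0 3 := hTsymm 3 0
  have h21 : T 2 1 = T 1 2 := hTsymm 2 1
  have h31 : T 3 1 = T 1 3 := hTsymm 3 1
  have h32 : T 3 2 = T 2 3 := hTsymm 3 2
  have x00 : X 0 0 = 0 := by have := hX 0 0; linear_combination this / 2
  have x11 : X 1 1 = 0 := by have := hX 1 1; linear_combination this / 2
  have x22 : X 2 2 = 0 := by have := hX 2 2; linear_combination this / 2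
  have x33 : X 3 3 = 0 := by have := hX 3 3; linear_combination this / 2
  have x10 : X 1 0 = - X 0 1 := hX 1 0
  have x20 : X 2 0 = - X 0 2 := hX 2 0
  have x30 : X 3 0 = - X 0 3 := hX 3 0
  have x21 : X 2 1 = - X 1 2 := hX 2 1
  have x31 : X 3 1 = - X 1 3 := hX 3 1
  have x32 : X 3 2 = - X 2 3 := hX 3 2
  have hF : (fun a' b' => ∑ c, ∑ d, ∑ e, ∑ f,
      (knE T a' b' c d : ℂ) * mkC c e * mkC d f * X e f)
      = fun a' b' => ∑ c, ∑ d, (knE T a' b' c d : ℂ) * mkC c c * mkC d d * X c d := by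
    funext a' b'; exact contract _ _
  rw [hF]
  fin_cases a <;> fin_cases b <;>
  · simp only [show (⟨0, by omega⟩ : Fin 4) = 0 from rfl, show (⟨1, by omega⟩ : Fin 4) = 1 from rfl,
      show (⟨2, by omega⟩ : Fin 4) = 2 from rfl, show (⟨3, by omega⟩ : Fin 4) = 3 from rfl]
    simp only [dual00, dual01, dual02, dual03, dual10, dual11, dual12, dual13,
      dual20, dual21, dual22, dual23, dual30, dual31, dual32, dual33, Fin.sum_univ_four]
    simp only [knE, mkC, mk, Fin.reduceEq, reduceIte, ite_true, ite_false,
      x00, x11, x22, x33, x10, x20, x30, x21, x31, x32, hT00, h10, h20, h30, h21, h31, h32]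
    push_cast
    ring

/-- `E` intertwines the duality eigenspaces: it sends anti-self-dual
two-forms to self-dual ones and vice versa. -/
theorem knE_intertwines_duality (T : Fin 4 → Fin 4 → ℝ)
    (hTsymm : ∀ a b, T a b = T b a) (hTtr : (∑ a, ∑ b, mk a b * T a b) = 0) :
    (∀ 𝒳 : Fin 4 → Fin 4 → ℂ, (∀ a b, 𝒳 a b = - 𝒳 b a) →
      (∀ a b, dualC 𝒳 a b = -Complex.I * 𝒳 a b) →
      ∀ a b, dualC (fun a' b' => ∑ c, ∑ d, ∑ e, ∑ f,
          (knE T a' b' c d : ℂ) * mkC c e * mkC d f * 𝒳 e f) a b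
        = Complex.I * (∑ c, ∑ d, ∑ e, ∑ f,
            (knE T a b c d : ℂ) * mkC c e * mkC d f * 𝒳 e f)) ∧
    (∀ 𝒵 : Fin 4 → Fin 4 → ℂ, (∀ a b, 𝒵 a b = - 𝒵 b a) →
      (∀ a b, dualC 𝒵 a b = Complex.I * 𝒵 a b) →
      ∀ a b, dualC (fun a' b' => ∑ c, ∑ d, ∑ e, ∑ f,
          (knE T a' b' c d : ℂ) * mkC c e * mkC d f * 𝒵 e f) a b
        = -Complex.I * (∑ c, ∑ d, ∑ e, ∑ f,
            (knE T a b c d : ℂ) * mkC c e * mkC d f * 𝒵 e f)) := by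
  constructor
  · intro X hanti hdual a b
    rw [key T hTsymm hTtr X hanti a b, contract]
    have h : ∀ c d : Fin 4, (knE T a b c d : ℂ) * mkC c c * mkC d d * dualC X c d
        = -(Complex.I * ((knE T a b c d : ℂ) * mkC c c * mkC d d * X c d)) := by
      intro c d; rw [hdual]; ring
    simp only [h, Finset.sum_neg_distrib, Finset.mul_sum, neg_neg]
  · intro X hanti hdual a b
    rw [key T hTsymm hTtr X hanti a b, contract]
    have h : ∀ c d : Fin 4, (knE T a b c d : ℂ) * mkC c c * mkC d d * dualC X c d
        = Complex.I * ((knE T a b c d : ℂ) * mkC c c * mkC d d * X c d) := by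
      intro c d; rw [hdual]; ring
    simp only [h, Finset.mul_sum, ← Finset.sum_neg_distrib]
    simp only [Finset.sum_neg_distrib, neg_mul]
end
end
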